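/- For 0 < s < 1 and λ > 0, with K(y,λ) = (2^{1−s}/Γ(s)) y^s λ^{s/2} K_s(yλ^{1/2}) and G(∞,y) = y/(2s), one has ∫₀^∞ G(∞,y) (∂_y K(y,λ))² dy = 1/(2(2−γ)) where γ = 1 − 2s; i.e. the multiplier for the Bessel vertical diffusion is the constant 1/(2(1+2s)). -/

import Mathlib

open MeasureTheory Set Filter Topology Real

/-- The MacDonald function (modified Bessel function of the second kind). -/
noncomputable def besselK (s x : ℝ) : ℝ :=
  (1/2) * (x/2) ^ s * ∫ t in Set.Ioi (0:ℝ), t ^ (-1 - s) * Real.exp (-t - x^2/(4*t))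

lemma swapIoi {f : ℝ → ℝ → ℝ} (hm : Measurable (Function.uncurry f))
    (hnn : ∀ x ∈ Ioi (0:ℝ), ∀ y ∈ Ioi (0:ℝ), 0 ≤ f x y)
    (h1 : ∀ x ∈ Ioi (0:ℝ), IntegrableOn (f x) (Ioi 0))
    (h2 : ∀ y ∈ Ioi (0:ℝ), IntegrableOn (fun x => f x y) (Ioi 0)) :
    ∫ x in Ioi (0:ℝ), ∫ y in Ioi (0:ℝ), f x y = ∫ y in Ioi (0:ℝ), ∫ x in Ioi (0:ℝ), f x y := by
  have key : ∀ (g : ℝ → ℝ → ℝ), Measurable (Function.uncurry g) →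
      (∀ x ∈ Ioi (0:ℝ), ∀ y ∈ Ioi (0:ℝ), 0 ≤ g x y) →
      (∀ x ∈ Ioi (0:ℝ), IntegrableOn (g x) (Ioi 0)) →
      ∫ x in Ioi (0:ℝ), ∫ y in Ioi (0:ℝ), g x y
        = (∫⁻ x in Ioi (0:ℝ), ∫⁻ y in Ioi (0:ℝ), ENNReal.ofReal (g x y)).toReal := by
    intro g hgm hgnn hg1
    rw [← integral_toReal]
    · apply integral_congr_ae
      filter_upwards [ae_restrict_mem measurableSet_Ioi] with x hx
      rw [integral_eq_lintegral_of_nonneg_ae]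
      · filter_upwards [ae_restrict_mem measurableSet_Ioi] with y hy using hgnn x hx y hy
      · exact (hgm.of_uncurry_left).aestronglyMeasurable
    · exact (Measurable.lintegral_prod_right (f := fun x y => ENNReal.ofReal (g x y)) (ENNReal.measurable_ofReal.comp hgm)).aemeasurable
    · filter_upwards [ae_restrict_mem measurableSet_Ioi] with x hx
      refine lt_of_le_of_lt (lintegral_mono fun y => ?_) (hg1 x hx).2
      refine (ENNReal.ofReal_le_ofReal (le_abs_self _)).trans ?_
      rw [← Real.norm_eq_abs, ofReal_norm]
  have h1' := key f hm hnn h1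
  have h2' := key (fun y x => f x y) (hm.comp measurable_swap)
    (fun y hy x hx => hnn x hx y hy) h2
  rw [h1', h2']
  congr 1
  exact lintegral_lintegral_swap ((ENNReal.measurable_ofReal.comp hm).aemeasurable)

lemma sq_div_four_le_exp {x : ℝ} (hx : 0 ≤ x) : x^2/4 ≤ Real.exp x := by
  have h := Real.add_one_le_exp (x/2)
  have h2 : Real.exp (x/2) * Real.exp (x/2) = Real.exp x := by
    rw [← Real.exp_add]; ring_nf
  nlinarith [Real.exp_pos (x/2)]

lemma measA (a b : ℝ) : Measurable (fun u : ℝ => u ^ a * Real.exp (-(b * u))) := by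
  fun_prop

lemma measJ (a b c : ℝ) : Measurable (fun u : ℝ => u ^ a * Real.exp (-(b * u) - c / u)) := by
  fun_prop

lemma integrableOn_A {a b : ℝ} (ha : -1 < a) (hb : 0 < b) :
    IntegrableOn (fun u : ℝ => u ^ a * Real.exp (-(b * u))) (Ioi 0) := by
  have h0 : IntegrableOn (fun x : ℝ => Real.exp (-x) * x ^ (a + 1 - 1)) (Ioi 0) :=
    Real.GammaIntegral_convergent (by linarith)
  have h2 : IntegrableOn (fun u : ℝ => Real.exp (-(b * u)) * (b * u) ^ (a + 1 - 1)) (Ioi 0) := by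
    have := (integrableOn_Ioi_comp_mul_left_iff
      (fun x : ℝ => Real.exp (-x) * x ^ (a + 1 - 1)) 0 hb).mpr (by simpa using h0)
    simpa using this
  have h3 := h2.const_mul (b ^ (-a))
  apply h3.congr
  filter_upwards [ae_restrict_mem measurableSet_Ioi] with u hu
  have hu0 : (0:ℝ) < u := hu
  rw [Real.mul_rpow hb.le hu0.le, ← mul_assoc, mul_comm (b ^ (-a)) (Real.exp _), mul_assoc,
    ← mul_assoc (b ^ (-a)), ← Real.rpow_add hb]
  rw [show -a + (a + 1 - 1) = 0 by ring, Real.rpow_zero]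
  ring_nf

lemma integral_A {a b : ℝ} (ha : -1 < a) (hb : 0 < b) :
    ∫ u in Ioi (0:ℝ), u ^ a * Real.exp (-(b * u)) = (1/b) ^ (a+1) * Real.Gamma (a+1) := by
  have := Real.integral_rpow_mul_exp_neg_mul_Ioi (a := a+1) (by linarith) hb
  simpa using this

lemma integrableOn_J {a b c : ℝ} (ha : -2 < a) (hb : 0 < b) (hc : 0 < c) :
    IntegrableOn (fun u : ℝ => u ^ a * Real.exp (-(b * u) - c / u)) (Ioi 0) := by
  apply Integrable.mono' ((integrableOn_A (a := a + 2) (by linarith) hb).const_mul (4 / c ^ 2))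
  · exact (measJ a b c).aestronglyMeasurable
  · filter_upwards [ae_restrict_mem measurableSet_Ioi] with u hu
    have hu0 : (0:ℝ) < u := hu
    have hcu : 0 ≤ c / u := by positivity
    have hexp : Real.exp (-(c/u)) ≤ 4 * u^2 / c^2 := by
      have hpos : (0:ℝ) < (c/u)^2/4 := by positivity
      rw [Real.exp_neg]
      have h5 : (Real.exp (c/u))⁻¹ ≤ ((c/u)^2/4)⁻¹ :=
        inv_anti₀ hpos (sq_div_four_le_exp hcu)
      refine h5.trans_eq ?_
      rw [div_pow]
      field_simp
    have hn : ‖u ^ a * Real.exp (-(b * u) - c / u)‖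
        = u ^ a * Real.exp (-(b*u)) * Real.exp (-(c/u)) := by
      rw [Real.norm_eq_abs, abs_of_nonneg (by positivity), mul_assoc, ← Real.exp_add, sub_eq_add_neg]
    rw [hn]
    have hmain : u ^ a * Real.exp (-(b*u)) * Real.exp (-(c/u))
        ≤ u ^ a * Real.exp (-(b*u)) * (4 * u^2 / c^2) :=
      mul_le_mul_of_nonneg_left hexp (by positivity)
    refine hmain.trans_eq ?_
    have : u ^ (a+2) = u ^ a * u ^ 2 := by
      rw [Real.rpow_add hu0, Real.rpow_two]
    rw [this]; ring

lemma J_inv (a b : ℝ) {c : ℝ} (hc : 0 < c) :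
    ∫ u in Ioi (0:ℝ), u ^ a * Real.exp (-(b * u) - c / u)
      = c ^ (a+1) * ∫ w in Ioi (0:ℝ), w ^ (-a-2) * Real.exp (-(1 * w) - (b*c) / w) := by
  have inv := integral_comp_rpow_Ioi (fun u : ℝ => u ^ a * Real.exp (-(b*u) - c/u))
    (p := -1) (by norm_num)
  rw [← inv]
  have step1 : ∀ x ∈ Ioi (0:ℝ), (|(-1:ℝ)| * x ^ ((-1:ℝ) - 1)) •
      ((fun u : ℝ => u ^ a * Real.exp (-(b * u) - c / u)) (x ^ (-1:ℝ)))
      = x ^ (-a-2) * Real.exp (-(c*x) - b / x) := by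
    intro x hx
    have hx0 : (0:ℝ) < x := hx
    simp only [Real.rpow_neg_one]
    rw [Real.inv_rpow hx0.le, ← Real.rpow_neg hx0.le, show c / x⁻¹ = c * x by field_simp, ← div_eq_mul_inv b x]
    rw [smul_eq_mul, abs_neg, abs_one, one_mul, ← mul_assoc, ← Real.rpow_add hx0]
    rw [show (-1:ℝ) - 1 + -a = -a - 2 by ring]
    congr 2
    ring
  rw [setIntegral_congr_fun measurableSet_Ioi step1]
  set T := ∫ w in Ioi (0:ℝ), w ^ (-a-2) * Real.exp (-(1 * w) - (b*c) / w) with hT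
  have scale := integral_comp_mul_left_Ioi
    (fun w : ℝ => w ^ (-a-2) * Real.exp (-(1*w) - (b*c)/w)) 0 hc
  rw [mul_zero] at scale
  have e2 : ∀ x ∈ Ioi (0:ℝ), (fun w : ℝ => w ^ (-a-2) * Real.exp (-(1*w) - (b*c)/w)) (c*x)
      = c ^ (-a-2) * (x ^ (-a-2) * Real.exp (-(c*x) - b/x)) := by
    intro x hx
    have hx0 : (0:ℝ) < x := hx
    simp only
    rw [Real.mul_rpow hc.le hx0.le, one_mul]
    rw [show b * c / (c * x) = b / x by field_simp]
    ring
  rw [setIntegral_congr_fun measurableSet_Ioi e2, integral_const_mul, smul_eq_mul] at scale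
  have hcne : (c : ℝ) ^ (-a-2) ≠ 0 := (Real.rpow_pos_of_pos hc _).ne'
  have key2 : c ^ (-a-2) * (c ^ (a+1) * T)
      = c ^ (-a-2) * ∫ x in Ioi (0:ℝ), x ^ (-a-2) * Real.exp (-(c*x) - b/x) := by
    rw [scale, ← mul_assoc, ← Real.rpow_add hc, show -a-2+(a+1) = (-1:ℝ) by ring,
      Real.rpow_neg_one]
  exact (mul_left_cancel₀ hcne key2).symm

noncomputable def Af (s c : ℝ) : ℝ := ∫ u in Ioi (0:ℝ), u ^ (s-1) * Real.exp (-u - c/u)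
noncomputable def Bf (s c : ℝ) : ℝ := ∫ u in Ioi (0:ℝ), u ^ (s-2) * Real.exp (-u - c/u)

lemma integrableOn_J' {a c : ℝ} (ha : -2 < a) (hc : 0 < c) :
    IntegrableOn (fun u : ℝ => u ^ a * Real.exp (-u - c / u)) (Ioi 0) := by
  simpa using integrableOn_J (b := 1) ha one_pos hc

lemma measurable_Bf (s : ℝ) : Measurable (Bf s) := by
  have hm : StronglyMeasurable
      (Function.uncurry fun (c u : ℝ) => u ^ (s-2) * Real.exp (-u - c/u)) := by
    apply Measurable.stronglyMeasurable
    show Measurable (fun p : ℝ × ℝ => p.2 ^ (s-2) * Real.exp (-p.2 - p.1/p.2))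
    fun_prop
  exact (hm.integral_prod_right (ν := volume.restrict (Ioi 0))).measurable

lemma Bf_nonneg (s c : ℝ) : 0 ≤ Bf s c := by
  apply integral_nonneg_of_ae
  filter_upwards [ae_restrict_mem measurableSet_Ioi] with u hu
  have : (0:ℝ) < u := hu
  positivity

lemma integrableOn_K {a c : ℝ} (ha : -1 < a) (hc : 0 < c) :
    IntegrableOn (fun u : ℝ => u ^ (-a-2) * Real.exp (-(c/u))) (Ioi 0) := by
  refine (integrableOn_Ioi_comp_rpow_iff _ (p := (-1:ℝ)) (by norm_num)).mp ?_
  apply (integrableOn_A ha hc).congr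
  filter_upwards [ae_restrict_mem measurableSet_Ioi] with x hx
  have hx0 : (0:ℝ) < x := hx
  simp only [Real.rpow_neg_one, smul_eq_mul]
  rw [Real.inv_rpow hx0.le, ← Real.rpow_neg hx0.le, abs_neg, abs_one, one_mul,
    show c / x⁻¹ = c * x by field_simp, ← mul_assoc, ← Real.rpow_add hx0,
    show (-1:ℝ)-1 + -(-a-2) = a by ring]

lemma integral_K {a c : ℝ} (ha : -1 < a) (hc : 0 < c) :
    ∫ u in Ioi (0:ℝ), u ^ (-a-2) * Real.exp (-(c/u)) = c ^ (-a-1) * Real.Gamma (a+1) := by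
  have h1 : ∫ u in Ioi (0:ℝ), u ^ (-a-2) * Real.exp (-(c/u))
      = ∫ u in Ioi (0:ℝ), u ^ (-a-2) * Real.exp (-(0 * u) - c/u) := by
    apply setIntegral_congr_fun measurableSet_Ioi
    intro u hu; norm_num
  rw [h1, J_inv (-a-2) 0 hc]
  have h2 : ∫ w in Ioi (0:ℝ), w ^ (-(-a-2)-2) * Real.exp (-(1 * w) - (0*c)/w)
      = ∫ w in Ioi (0:ℝ), w ^ a * Real.exp (-(1 * w)) := by
    apply setIntegral_congr_fun measurableSet_Ioi
    intro w hw
    have hw0 : (0:ℝ) < w := hw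
    rw [show -(-a-2)-2 = a by ring]
    norm_num
  rw [h2, integral_A ha one_pos]
  rw [show (-a-2)+1 = -a-1 by ring]
  norm_num

lemma Bf_le {s c : ℝ} (hs1 : s < 1) (hc : 0 < c) :
    Bf s c ≤ Real.Gamma (1-s) * c ^ (s-1) := by
  have key : Bf s c ≤ ∫ u in Ioi (0:ℝ), u ^ (s-2) * Real.exp (-(c/u)) := by
    apply integral_mono_of_nonneg
    · filter_upwards [ae_restrict_mem measurableSet_Ioi] with u hu
      have : (0:ℝ) < u := hu; positivity
    · have hK := integrableOn_K (a := -s) (by linarith) hc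
      rw [show -(-s)-2 = s - 2 by ring] at hK
      exact hK
    · filter_upwards [ae_restrict_mem measurableSet_Ioi] with u hu
      have hu0 : (0:ℝ) < u := hu
      apply mul_le_mul_of_nonneg_left _ (by positivity)
      apply Real.exp_le_exp.mpr
      have : 0 ≤ c / u := by positivity
      linarith [hu0.le]
  refine key.trans_eq ?_
  have := integral_K (a := -s) (c := c) (by linarith) hc
  rw [show -(-s)-2 = s - 2 by ring, show -(-s)-1 = s-1 by ring, show -s+1 = 1-s by ring] at this
  rw [this]; ring



lemma hasDerivAt_Af {s c : ℝ} (hs : 0 < s) (hc : 0 < c) :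
    HasDerivAt (Af s) (-(Bf s c)) c := by
  have h := hasDerivAt_integral_of_dominated_loc_of_deriv_le (s := Metric.ball c (c/2)) (Metric.ball_mem_nhds c (by positivity))
    (μ := volume.restrict (Ioi 0)) (x₀ := c)
    (F := fun c' u => u ^ (s-1) * Real.exp (-u - c'/u))
    (F' := fun c' u => -(u ^ (s-2) * Real.exp (-u - c'/u)))
    (bound := fun u => u ^ (s-2) * Real.exp (-u - (c/2)/u))
    (Eventually.of_forall fun c' => Measurable.aestronglyMeasurable (by fun_prop))
    (integrableOn_J' (by linarith) hc)
    (Measurable.aestronglyMeasurable (by fun_prop))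
    ?bd (integrableOn_J' (by linarith) (by positivity)) ?diff
  · have hD := h.2
    have : (∫ u in Ioi (0:ℝ), -(u ^ (s-2) * Real.exp (-u - c/u))) = -(Bf s c) := by
      rw [integral_neg]; rfl
    rw [this] at hD
    exact hD
  case bd =>
    filter_upwards [ae_restrict_mem measurableSet_Ioi] with u hu
    intro c' hc'
    have hu0 : (0:ℝ) < u := hu
    have hc'2 : c/2 ≤ c' := by
      rw [Metric.mem_ball, Real.dist_eq, abs_sub_lt_iff] at hc'
      linarith
    rw [norm_neg, Real.norm_eq_abs, abs_of_nonneg (by positivity)]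
    apply mul_le_mul_of_nonneg_left _ (by positivity)
    apply Real.exp_le_exp.mpr
    have : c/2/u ≤ c'/u := by
      exact div_le_div_of_nonneg_right hc'2 hu0.le
    linarith
  case diff =>
    filter_upwards [ae_restrict_mem measurableSet_Ioi] with u hu
    intro c' hc'
    have hu0 : (0:ℝ) < u := hu
    have h1 : HasDerivAt (fun c' : ℝ => -u - c'/u) (-(1/u)) c' := by
      simpa using HasDerivAt.const_sub (-u) ((hasDerivAt_id c').div_const u)
    have h2 := (h1.exp).const_mul (u ^ (s-1))
    refine h2.congr_deriv ?_; symm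
    rw [show s-2 = s-1-1 by ring, Real.rpow_sub_one hu0.ne']
    field_simp



lemma besselK_eq {s x : ℝ} (hx : 0 < x) :
    besselK s x = 2 ^ (s-1) * x ^ (-s) * Af s (x^2/4) := by
  have hc : (0:ℝ) < x^2/4 := by positivity
  have h1 : ∫ t in Ioi (0:ℝ), t ^ (-1 - s) * Real.exp (-t - x^2/(4*t))
      = ∫ t in Ioi (0:ℝ), t ^ (-1-s) * Real.exp (-(1*t) - (x^2/4)/t) := by
    apply setIntegral_congr_fun measurableSet_Ioi
    intro t ht
    simp only [one_mul, div_mul_eq_div_div]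
  have h2 : ∫ w in Ioi (0:ℝ), w ^ (-(-1-s)-2) * Real.exp (-(1 * w) - (1*(x^2/4))/w)
      = Af s (x^2/4) := by
    apply setIntegral_congr_fun measurableSet_Ioi
    intro w hw
    simp only [one_mul, show -(-1-s)-2 = s-1 from by ring]
  rw [besselK, h1, J_inv (-1-s) 1 hc, h2, show (-1-s+1 : ℝ) = -s by ring]
  have hconst : (1/2 : ℝ) * (x/2)^s * (x^2/4)^(-s) = 2^(s-1) * x^(-s) := by
    rw [Real.div_rpow hx.le (by norm_num : (0:ℝ) ≤ 2),
      Real.div_rpow (by positivity) (by norm_num : (0:ℝ) ≤ 4)]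
    rw [← Real.rpow_natCast x 2, ← Real.rpow_mul hx.le]
    rw [show (4:ℝ) = 2^(2:ℝ) by rw [Real.rpow_two]; norm_num, ← Real.rpow_mul (by norm_num)]
    rw [Real.rpow_neg hx.le s]
    rw [show ((2:ℕ):ℝ) * -s = -(2*s) by push_cast; ring, show (2:ℝ) * -s = -(2*s) by ring]
    rw [Real.rpow_neg hx.le, Real.rpow_neg (by norm_num : (0:ℝ) ≤ 2)]
    rw [show x ^ (2*s) = x^s * x^s by rw [← Real.rpow_add hx]; ring_nf,
      show (2:ℝ) ^ (2*s) = 2^s * 2^s by rw [← Real.rpow_add (by norm_num)]; ring_nf]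
    have h2s : (2:ℝ)^s ≠ 0 := (Real.rpow_pos_of_pos (by norm_num) s).ne'
    have hxs : x^s ≠ 0 := (Real.rpow_pos_of_pos hx s).ne'
    rw [Real.rpow_sub (by norm_num : (0:ℝ) < 2), Real.rpow_one]
    field_simp
  rw [← mul_assoc, hconst]

lemma final_int {s : ℝ} (hs : 0 < s) :
    ∫ t in Ioi (0:ℝ), t * (1+t) ^ (-(2*s+2)) = 1/(2*s*(2*s+1)) := by
  have hne1 : -(2*s) ≠ 0 := neg_ne_zero.mpr (by positivity)
  have hne2 : -(2*s+1) ≠ 0 := neg_ne_zero.mpr (by positivity)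
  have hderiv : ∀ x ∈ Ici (0:ℝ), HasDerivAt
      (fun t : ℝ => (1+t)^(-(2*s))/(-(2*s)) - (1+t)^(-(2*s+1))/(-(2*s+1)))
      (x * (1+x)^(-(2*s+2))) x := by
    intro x hx
    have hx0 : (0:ℝ) ≤ x := hx
    have hx1 : (0:ℝ) < 1 + x := by linarith
    have hbase : HasDerivAt (fun t : ℝ => 1 + t) 1 x := (hasDerivAt_id x).const_add 1
    have h1 : HasDerivAt (fun t : ℝ => (1+t)^(-(2*s)))
        ((-(2*s)) * (1+x)^(-(2*s)-1) * 1) x :=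
      (Real.hasDerivAt_rpow_const (p := -(2*s)) (Or.inl hx1.ne')).comp x hbase
    have h2 : HasDerivAt (fun t : ℝ => (1+t)^(-(2*s+1)))
        ((-(2*s+1)) * (1+x)^(-(2*s+1)-1) * 1) x :=
      (Real.hasDerivAt_rpow_const (p := -(2*s+1)) (Or.inl hx1.ne')).comp x hbase
    have h3 := (h1.div_const (-(2*s))).sub (h2.div_const (-(2*s+1)))
    refine h3.congr_deriv ?_; symm
    rw [mul_one, mul_one, mul_div_cancel_left₀ _ hne1, mul_div_cancel_left₀ _ hne2]
    rw [show -(2*s)-1 = -(2*s+2)+1 by ring, show -(2*s+1)-1 = -(2*s+2) by ring,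
      Real.rpow_add_one hx1.ne' (-(2*s+2))]
    ring
  have hnn : ∀ x ∈ Ioi (0:ℝ), 0 ≤ x * (1+x)^(-(2*s+2)) := by
    intro x hx
    have hx0 : (0:ℝ) < x := hx
    have : (0:ℝ) < 1 + x := by linarith
    positivity
  have htend : Tendsto (fun t : ℝ => (1+t)^(-(2*s))/(-(2*s)) - (1+t)^(-(2*s+1))/(-(2*s+1)))
      atTop (𝓝 0) := by
    have hcomp : Tendsto (fun t : ℝ => 1 + t) atTop atTop :=
      tendsto_atTop_add_const_left _ 1 tendsto_id
    have l1 : Tendsto (fun t:ℝ => (1+t)^(-(2*s))) atTop (𝓝 0) :=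
      (tendsto_rpow_neg_atTop (by linarith)).comp hcomp
    have l2 : Tendsto (fun t:ℝ => (1+t)^(-(2*s+1))) atTop (𝓝 0) :=
      (tendsto_rpow_neg_atTop (by linarith)).comp hcomp
    have := (l1.div_const (-(2*s))).sub (l2.div_const (-(2*s+1)))
    simpa only [zero_div, sub_zero] using this
  have hint : IntegrableOn (fun x : ℝ => x * (1+x)^(-(2*s+2))) (Ioi (0:ℝ)) :=
    integrableOn_Ioi_deriv_of_nonneg' hderiv hnn htend
  have hval := integral_Ioi_of_hasDerivAt_of_tendsto' hderiv hint htend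
  rw [hval]
  norm_num
  have h1 : s ≠ 0 := hs.ne'
  have h2 : 2*s+1 ≠ 0 := by positivity
  have h3 : -1 + -(2*s) ≠ 0 := by intro h; nlinarith
  field_simp
  ring


lemma rpow_shift2 {u : ℝ} (hu : 0 < u) (s : ℝ) : u ^ s = u ^ (s-2) * u^2 := by
  rw [← Real.rpow_natCast u 2, ← Real.rpow_add hu]; norm_num

lemma T_val {s : ℝ} (hs : 0 < s) (hs1 : s < 1) :
    ∫ t in Ioi (0:ℝ), t * (Bf s t)^2 = Real.Gamma (s+1)^2 / (2*s*(2*s+1)) := by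
  -- Step 1: expand one factor of Bf
  have step1 : ∫ t in Ioi (0:ℝ), t * (Bf s t)^2
      = ∫ t in Ioi (0:ℝ), ∫ u in Ioi (0:ℝ), t * Bf s t * (u ^ (s-2) * Real.exp (-u - t/u)) := by
    apply setIntegral_congr_fun measurableSet_Ioi
    intro t ht
    simp only
    rw [integral_const_mul]
    have hBf : (∫ u in Ioi (0:ℝ), u ^ (s-2) * Real.exp (-u - t/u)) = Bf s t := rfl
    rw [hBf]; ring
  -- Fubini 1
  have swap1 : ∫ t in Ioi (0:ℝ), ∫ u in Ioi (0:ℝ), t * Bf s t * (u ^ (s-2) * Real.exp (-u - t/u))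
      = ∫ u in Ioi (0:ℝ), ∫ t in Ioi (0:ℝ), t * Bf s t * (u ^ (s-2) * Real.exp (-u - t/u)) := by
    apply swapIoi
    · exact (measurable_fst.mul ((measurable_Bf s).comp measurable_fst)).mul (by fun_prop)
    · intro t ht u hu
      have ht0 : (0:ℝ) < t := ht
      have hu0 : (0:ℝ) < u := hu
      have := Bf_nonneg s t
      positivity
    · intro t ht
      exact (integrableOn_J' (by linarith) ht).const_mul (t * Bf s t)
    · intro u hu
      have hu0 : (0:ℝ) < u := hu
      apply Integrable.mono' ((integrableOn_A (a := s) (by linarith)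
        (inv_pos.mpr hu0)).const_mul (Real.Gamma (1-s) * (u ^ (s-2) * Real.exp (-u))))
      · exact ((measurable_id.mul (measurable_Bf s)).mul (by fun_prop)).aestronglyMeasurable
      · filter_upwards [ae_restrict_mem measurableSet_Ioi] with t ht
        have ht0 : (0:ℝ) < t := ht
        have hB := Bf_le hs1 ht0
        have hBnn := Bf_nonneg s t
        rw [Real.norm_eq_abs, abs_of_nonneg (by positivity)]
        have hsplit : Real.exp (-u - t/u) = Real.exp (-u) * Real.exp (-(u⁻¹*t)) := by
          rw [← Real.exp_add]; ring
        have ht_pow : t * t^(s-1) = t^s := by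
          nth_rewrite 1 [← Real.rpow_one t]
          rw [← Real.rpow_add ht0]; norm_num
        calc t * Bf s t * (u ^ (s-2) * Real.exp (-u - t/u))
            ≤ t * (Real.Gamma (1-s) * t^(s-1)) * (u ^ (s-2) * Real.exp (-u - t/u)) := by
              apply mul_le_mul_of_nonneg_right (mul_le_mul_of_nonneg_left hB ht0.le)
                (by positivity)
          _ = Real.Gamma (1-s) * (u ^ (s-2) * Real.exp (-u)) * (t^s * Real.exp (-(u⁻¹*t))) := by
              rw [hsplit, ← ht_pow]; ring
  -- rewrite inner integral for fixed u : pull out u-factors and expand second Bf, Fubini 2,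
  -- and compute the t-integral
  have step2 : ∀ u ∈ Ioi (0:ℝ),
      (∫ t in Ioi (0:ℝ), t * Bf s t * (u ^ (s-2) * Real.exp (-u - t/u)))
      = ∫ v in Ioi (0:ℝ), u^s * Real.exp (-u) * (v^s * Real.exp (-v) * (((u+v)^2)⁻¹)) := by
    intro u hu
    have hu0 : (0:ℝ) < u := hu
    have e1 : (∫ t in Ioi (0:ℝ), t * Bf s t * (u ^ (s-2) * Real.exp (-u - t/u)))
        = ∫ t in Ioi (0:ℝ), ∫ v in Ioi (0:ℝ),
            (u ^ (s-2) * Real.exp (-u)) * (t * Real.exp (-(u⁻¹*t))) *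
              (v ^ (s-2) * Real.exp (-v - t/v)) := by
      apply setIntegral_congr_fun measurableSet_Ioi
      intro t ht
      have ht0 : (0:ℝ) < t := ht
      simp only
      rw [integral_const_mul]
      have hBf : (∫ v in Ioi (0:ℝ), v ^ (s-2) * Real.exp (-v - t/v)) = Bf s t := rfl
      rw [hBf]
      rw [show Real.exp (-u - t/u) = Real.exp (-u) * Real.exp (-(u⁻¹*t)) by
        rw [← Real.exp_add]; ring]
      ring
    rw [e1]
    have swap2 : ∫ t in Ioi (0:ℝ), ∫ v in Ioi (0:ℝ),
          (u ^ (s-2) * Real.exp (-u)) * (t * Real.exp (-(u⁻¹*t))) *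
            (v ^ (s-2) * Real.exp (-v - t/v))
        = ∫ v in Ioi (0:ℝ), ∫ t in Ioi (0:ℝ),
            (u ^ (s-2) * Real.exp (-u)) * (t * Real.exp (-(u⁻¹*t))) *
              (v ^ (s-2) * Real.exp (-v - t/v)) := by
      apply swapIoi
      · fun_prop
      · intro t ht v hv
        have ht0 : (0:ℝ) < t := ht
        have hv0 : (0:ℝ) < v := hv
        positivity
      · intro t ht
        have ht0 : (0:ℝ) < t := ht
        exact (integrableOn_J' (by linarith) ht0).const_mul _
      · intro v hv
        have hv0 : (0:ℝ) < v := hv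
        apply ((integrableOn_A (a := (1:ℝ)) (by norm_num) (b := u⁻¹ + v⁻¹)
          (by positivity)).const_mul
          ((u ^ (s-2) * Real.exp (-u)) * (v ^ (s-2) * Real.exp (-v)))).congr
        filter_upwards [ae_restrict_mem measurableSet_Ioi] with t ht
        have ht0 : (0:ℝ) < t := ht
        rw [Real.rpow_one]
        rw [show Real.exp (-v - t/v) = Real.exp (-v) * Real.exp (-(v⁻¹*t)) by
          rw [← Real.exp_add]; ring]
        rw [show Real.exp (-((u⁻¹+v⁻¹)*t)) = Real.exp (-(u⁻¹*t)) * Real.exp (-(v⁻¹*t)) by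
          rw [← Real.exp_add]; congr 1; ring]
        ring
    rw [swap2]
    apply setIntegral_congr_fun measurableSet_Ioi
    intro v hv
    have hv0 : (0:ℝ) < v := hv
    simp only
    have e2 : ∀ t ∈ Ioi (0:ℝ),
        (u ^ (s-2) * Real.exp (-u)) * (t * Real.exp (-(u⁻¹*t))) *
            (v ^ (s-2) * Real.exp (-v - t/v))
        = ((u ^ (s-2) * Real.exp (-u)) * (v ^ (s-2) * Real.exp (-v))) *
            (t ^ (1:ℝ) * Real.exp (-((u⁻¹+v⁻¹)*t))) := by
      intro t ht
      have ht0 : (0:ℝ) < t := ht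
      rw [Real.rpow_one]
      rw [show Real.exp (-v - t/v) = Real.exp (-v) * Real.exp (-(v⁻¹*t)) by
        rw [← Real.exp_add]; ring]
      rw [show Real.exp (-((u⁻¹+v⁻¹)*t)) = Real.exp (-(u⁻¹*t)) * Real.exp (-(v⁻¹*t)) by
        rw [← Real.exp_add]; congr 1; ring]
      ring
    rw [setIntegral_congr_fun measurableSet_Ioi e2, integral_const_mul,
      integral_A (by norm_num) (by positivity)]
    rw [show ((1:ℝ)+1) = (2:ℝ) by norm_num, Real.Gamma_two, Real.rpow_two,
      show (1/(u⁻¹+v⁻¹) : ℝ) = u*v/(u+v) by field_simp; ring,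
      rpow_shift2 hu0 s, rpow_shift2 hv0 s]
    have huv : (u+v) ≠ 0 := by positivity
    field_simp
  -- Step 3: for fixed u, replace ((u+v)^2)⁻¹ by a t-integral, swap, and integrate over v
  have step3 : ∀ u ∈ Ioi (0:ℝ),
      (∫ v in Ioi (0:ℝ), u^s * Real.exp (-u) * (v^s * Real.exp (-v) * (((u+v)^2)⁻¹)))
      = ∫ t in Ioi (0:ℝ),
          (u^s * Real.exp (-u)) * (t^(1:ℝ) * Real.exp (-(u*t))) *
            ((1/(1+t))^(s+1) * Real.Gamma (s+1)) := by
    intro u hu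
    have hu0 : (0:ℝ) < u := hu
    have e3 : ∀ v ∈ Ioi (0:ℝ), u^s * Real.exp (-u) * (v^s * Real.exp (-v) * (((u+v)^2)⁻¹))
        = ∫ t in Ioi (0:ℝ),
            (u^s * Real.exp (-u)) * (v^s * Real.exp (-v)) * (t^(1:ℝ) * Real.exp (-((u+v)*t))) := by
      intro v hv
      have hv0 : (0:ℝ) < v := hv
      rw [integral_const_mul, integral_A (by norm_num) (by positivity)]
      rw [show ((1:ℝ)+1) = (2:ℝ) by norm_num, Real.Gamma_two, Real.rpow_two, div_pow, one_pow,
        one_div]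
      ring
    rw [setIntegral_congr_fun measurableSet_Ioi e3]
    have swap3 : ∫ v in Ioi (0:ℝ), ∫ t in Ioi (0:ℝ),
          (u^s * Real.exp (-u)) * (v^s * Real.exp (-v)) * (t^(1:ℝ) * Real.exp (-((u+v)*t)))
        = ∫ t in Ioi (0:ℝ), ∫ v in Ioi (0:ℝ),
          (u^s * Real.exp (-u)) * (v^s * Real.exp (-v)) * (t^(1:ℝ) * Real.exp (-((u+v)*t))) := by
      apply swapIoi
      · fun_prop
      · intro v hv t ht
        have hv0 : (0:ℝ) < v := hv
        have ht0 : (0:ℝ) < t := ht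
        positivity
      · intro v hv
        have hv0 : (0:ℝ) < v := hv
        have := (integrableOn_A (a := (1:ℝ)) (by norm_num) (b := u+v) (by positivity)).const_mul
          ((u^s * Real.exp (-u)) * (v^s * Real.exp (-v)))
        apply this.congr
        filter_upwards with t using by ring
      · intro t ht
        have ht0 : (0:ℝ) < t := ht
        apply ((integrableOn_A (a := s) (by linarith) (b := 1+t)
          (by positivity)).const_mul ((u^s * Real.exp (-u)) * (t^(1:ℝ) * Real.exp (-(u*t))))).congr
        filter_upwards [ae_restrict_mem measurableSet_Ioi] with v hv
        have hv0 : (0:ℝ) < v := hv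
        rw [show Real.exp (-((1+t)*v)) = Real.exp (-v) * Real.exp (-(v*t)) by
          rw [← Real.exp_add]; ring_nf,
          show Real.exp (-((u+v)*t)) = Real.exp (-(u*t)) * Real.exp (-(v*t)) by
          rw [← Real.exp_add]; ring_nf]
        ring
    rw [swap3]
    apply setIntegral_congr_fun measurableSet_Ioi
    intro t ht
    have ht0 : (0:ℝ) < t := ht
    simp only
    have e4 : ∀ v ∈ Ioi (0:ℝ),
        (u^s * Real.exp (-u)) * (v^s * Real.exp (-v)) * (t^(1:ℝ) * Real.exp (-((u+v)*t)))
        = ((u^s * Real.exp (-u)) * (t^(1:ℝ) * Real.exp (-(u*t)))) *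
            (v^s * Real.exp (-((1+t)*v))) := by
      intro v hv
      rw [show Real.exp (-((1+t)*v)) = Real.exp (-v) * Real.exp (-(v*t)) by
        rw [← Real.exp_add]; ring_nf,
        show Real.exp (-((u+v)*t)) = Real.exp (-(u*t)) * Real.exp (-(v*t)) by
        rw [← Real.exp_add]; ring_nf]
      ring
    rw [setIntegral_congr_fun measurableSet_Ioi e4, integral_const_mul,
      integral_A (by linarith) (by positivity)]
  -- Step 4: final swap and collapse
  have swap4 : ∫ u in Ioi (0:ℝ), ∫ t in Ioi (0:ℝ),
        (u^s * Real.exp (-u)) * (t^(1:ℝ) * Real.exp (-(u*t))) *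
          ((1/(1+t))^(s+1) * Real.Gamma (s+1))
      = ∫ t in Ioi (0:ℝ), ∫ u in Ioi (0:ℝ),
        (u^s * Real.exp (-u)) * (t^(1:ℝ) * Real.exp (-(u*t))) *
          ((1/(1+t))^(s+1) * Real.Gamma (s+1)) := by
    apply swapIoi
    · fun_prop
    · intro u hu t ht
      have hu0 : (0:ℝ) < u := hu
      have ht0 : (0:ℝ) < t := ht
      have h1t : (0:ℝ) < 1 + t := by linarith
      have hg : 0 < Real.Gamma (s+1) := Real.Gamma_pos_of_pos (by linarith)
      positivity
    · intro u hu
      have hu0 : (0:ℝ) < u := hu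
      have hg : 0 < Real.Gamma (s+1) := Real.Gamma_pos_of_pos (by linarith)
      apply Integrable.mono' ((integrableOn_A (a := (1:ℝ)) (by norm_num) hu0).const_mul
        ((u^s * Real.exp (-u)) * Real.Gamma (s+1)))
      · apply Measurable.aestronglyMeasurable; fun_prop
      · filter_upwards [ae_restrict_mem measurableSet_Ioi] with t ht
        have ht0 : (0:ℝ) < t := ht
        have h1t : (0:ℝ) < 1 + t := by linarith
        have hle : (1/(1+t))^(s+1) ≤ 1 := by
          apply Real.rpow_le_one (by positivity) _ (by linarith)
          rw [div_le_one h1t]; linarith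
        rw [Real.norm_eq_abs, abs_of_nonneg (by positivity)]
        calc (u^s * Real.exp (-u)) * (t^(1:ℝ) * Real.exp (-(u*t))) *
              ((1/(1+t))^(s+1) * Real.Gamma (s+1))
            ≤ (u^s * Real.exp (-u)) * (t^(1:ℝ) * Real.exp (-(u*t))) * (1 * Real.Gamma (s+1)) := by
              apply mul_le_mul_of_nonneg_left (mul_le_mul_of_nonneg_right hle hg.le)
                (by positivity)
          _ = u^s * Real.exp (-u) * Real.Gamma (s+1) * (t^(1:ℝ) * Real.exp (-(u*t))) := by ring
    · intro t ht
      have ht0 : (0:ℝ) < t := ht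
      have h1t : (0:ℝ) < 1 + t := by linarith
      apply ((integrableOn_A (a := s) (by linarith) (b := 1+t) (by positivity)).const_mul
        ((t^(1:ℝ) * ((1/(1+t))^(s+1) * Real.Gamma (s+1))))).congr
      filter_upwards [ae_restrict_mem measurableSet_Ioi] with u hu
      rw [show Real.exp (-((1+t)*u)) = Real.exp (-u) * Real.exp (-(u*t)) by
        rw [← Real.exp_add]; ring_nf]
      ring
  -- inner u-integral in swap4 RHS
  have step5 : ∀ t ∈ Ioi (0:ℝ),
      (∫ u in Ioi (0:ℝ), (u^s * Real.exp (-u)) * (t^(1:ℝ) * Real.exp (-(u*t))) *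
          ((1/(1+t))^(s+1) * Real.Gamma (s+1)))
      = Real.Gamma (s+1)^2 * (t * (1+t) ^ (-(2*s+2))) := by
    intro t ht
    have ht0 : (0:ℝ) < t := ht
    have h1t : (0:ℝ) < 1 + t := by linarith
    have e5 : ∀ u ∈ Ioi (0:ℝ),
        (u^s * Real.exp (-u)) * (t^(1:ℝ) * Real.exp (-(u*t))) *
            ((1/(1+t))^(s+1) * Real.Gamma (s+1))
        = ((t^(1:ℝ) * ((1/(1+t))^(s+1) * Real.Gamma (s+1)))) * (u^s * Real.exp (-((1+t)*u))) := by
      intro u hu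
      rw [show Real.exp (-((1+t)*u)) = Real.exp (-u) * Real.exp (-(u*t)) by
        rw [← Real.exp_add]; ring_nf]
      ring
    rw [setIntegral_congr_fun measurableSet_Ioi e5, integral_const_mul,
      integral_A (by linarith) (by positivity)]
    have hpow : (1/(1+t))^(s+1) = (1+t)^(-(s+1)) := by
      rw [one_div, Real.inv_rpow h1t.le, ← Real.rpow_neg h1t.le]
    rw [Real.rpow_one, hpow, show -(2*s+2) = -(s+1) + -(s+1) by ring, Real.rpow_add h1t]
    ring
  rw [step1, swap1, setIntegral_congr_fun measurableSet_Ioi step2,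
    setIntegral_congr_fun measurableSet_Ioi step3, swap4,
    setIntegral_congr_fun measurableSet_Ioi step5, integral_const_mul, final_int hs]
  field_simp



/-- For `0 < s < 1` and `λ > 0`, with `K(y,λ) = (2^{1−s}/Γ(s)) y^s λ^{s/2} K_s(yλ^{1/2})` and
`G(∞,y) = y/(2s)`, one has `∫₀^∞ G(∞,y)(∂_y K(y,λ))² dy = 1/(2(2−γ))` with `γ = 1 − 2s`,
i.e. the multiplier for the Bessel vertical diffusion is the constant `1/(2(1+2s))`. -/
theorem bessel_multiplier_constant
    (s lam : ℝ) (hs : 0 < s) (hs1 : s < 1) (hlam : 0 < lam)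
    (F : ℝ → ℝ)
    (hF : ∀ y, F y = (2:ℝ) ^ (1-s) / Real.Gamma s * y ^ s * lam ^ (s/2)
      * besselK s (y * Real.sqrt lam)) :
    (∫ y in Set.Ioi (0:ℝ), (y/(2*s)) * (deriv F y)^2 = 1/(2*(2 - (1 - 2*s)))) ∧
    (∫ y in Set.Ioi (0:ℝ), (y/(2*s)) * (deriv F y)^2 = 1/(2*(1 + 2*s))) := by
  have hΓ : 0 < Real.Gamma s := Real.Gamma_pos_of_pos hs
  have hΓne : Real.Gamma s ≠ 0 := hΓ.ne'
  have key : ∫ y in Set.Ioi (0:ℝ), (y/(2*s)) * (deriv F y)^2 = 1/(2*(1 + 2*s)) := by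
    have hFeq : ∀ y ∈ Ioi (0:ℝ), F y = Af s (lam*y^2/4) / Real.Gamma s := by
      intro y hy
      have hy0 : (0:ℝ) < y := hy
      have hsl : (0:ℝ) < Real.sqrt lam := Real.sqrt_pos.mpr hlam
      have hx : 0 < y * Real.sqrt lam := mul_pos hy0 hsl
      rw [hF y, besselK_eq hx]
      have hsq : (y * Real.sqrt lam)^2/4 = lam*y^2/4 := by
        rw [mul_pow, Real.sq_sqrt hlam.le]; ring
      rw [hsq]
      rw [Real.mul_rpow hy0.le hsl.le]
      have h2 : (2:ℝ)^(1-s) * 2^(s-1) = 1 := by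
        rw [← Real.rpow_add two_pos]; norm_num
      have hy2 : y^s * y^(-s) = 1 := by
        rw [← Real.rpow_add hy0]; norm_num
      have hl2 : lam^(s/2) * (Real.sqrt lam)^(-s) = 1 := by
        rw [Real.sqrt_eq_rpow, ← Real.rpow_mul hlam.le, ← Real.rpow_add hlam,
          show s/2 + 1/2 * -s = 0 by ring, Real.rpow_zero]
      calc (2:ℝ) ^ (1-s) / Real.Gamma s * y ^ s * lam ^ (s/2)
            * (2 ^ (s-1) * (y ^ (-s) * (Real.sqrt lam) ^ (-s)) * Af s (lam*y^2/4))
          = ((2:ℝ)^(1-s) * 2^(s-1)) * (y^s * y^(-s)) * (lam^(s/2) * (Real.sqrt lam)^(-s))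
            * Af s (lam*y^2/4) / Real.Gamma s := by ring
        _ = Af s (lam*y^2/4) / Real.Gamma s := by rw [h2, hy2, hl2]; ring
    have hDeriv : ∀ y ∈ Ioi (0:ℝ), deriv F y
        = -(Bf s (lam*y^2/4)) * (lam*y/2) / Real.Gamma s := by
      intro y hy
      have hy0 : (0:ℝ) < y := hy
      have hc : 0 < lam*y^2/4 := by positivity
      have hpoly : HasDerivAt (fun z : ℝ => lam*z^2/4) (lam*y/2) y := by
        have h := ((hasDerivAt_pow 2 y).const_mul lam).div_const 4
        refine h.congr_deriv ?_; symm
        norm_num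
        ring
      have hchain := ((hasDerivAt_Af hs hc).comp y hpoly).div_const (Real.Gamma s)
      have hEq : F =ᶠ[𝓝 y] (fun z => Af s (lam*z^2/4) / Real.Gamma s) := by
        filter_upwards [Ioi_mem_nhds hy0] with z hz
        exact hFeq z hz
      exact (hchain.congr_of_eventuallyEq hEq).deriv
    have hM : ∫ y in Ioi (0:ℝ), (y/(2*s)) * (deriv F y)^2
        = ∫ y in Ioi (0:ℝ), (lam^2/(8*s*(Real.Gamma s)^2)) * (y^3 * (Bf s (lam*y^2/4))^2) := by
      apply setIntegral_congr_fun measurableSet_Ioi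
      intro y hy
      simp only
      rw [hDeriv y hy]
      field_simp
      ring
    rw [hM, integral_const_mul]
    have hsub : ∫ y in Ioi (0:ℝ), y^3 * (Bf s (lam*y^2/4))^2
        = (1/2) * ∫ r in Ioi (0:ℝ), r * (Bf s (lam*r/4))^2 := by
      have h := integral_comp_rpow_Ioi_of_pos
        (g := fun r => (1/2) * (r * (Bf s (lam*r/4))^2)) (p := (2:ℝ)) two_pos
      rw [show ((1:ℝ)/2) * ∫ r in Ioi (0:ℝ), r * (Bf s (lam*r/4))^2
          = ∫ r in Ioi (0:ℝ), (1/2) * (r * (Bf s (lam*r/4))^2) from (integral_const_mul _ _).symm]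
      rw [← h]
      apply setIntegral_congr_fun measurableSet_Ioi
      intro y hy
      have hy0 : (0:ℝ) < y := hy
      simp only [smul_eq_mul]
      rw [show (2:ℝ)-1 = 1 by norm_num, Real.rpow_one, Real.rpow_two]
      ring
    have hsc : ∫ r in Ioi (0:ℝ), r * (Bf s (lam*r/4))^2
        = (16/lam^2) * ∫ t in Ioi (0:ℝ), t * (Bf s t)^2 := by
      have h4 : (0:ℝ) < 4/lam := by positivity
      have h := integral_comp_mul_left_Ioi (g := fun r => r * (Bf s (lam*r/4))^2) 0 h4
      rw [mul_zero] at h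
      have e : ∀ x ∈ Ioi (0:ℝ), (fun r => r * (Bf s (lam*r/4))^2) ((4/lam)*x)
          = (4/lam) * (x * (Bf s x)^2) := by
        intro x hx
        simp only
        rw [show lam*((4/lam)*x)/4 = x by field_simp]
        ring
      rw [setIntegral_congr_fun measurableSet_Ioi e, integral_const_mul, smul_eq_mul] at h
      have h4ne : (4:ℝ)/lam ≠ 0 := h4.ne'
      have h2 := congrArg (fun z => (4/lam) * z) h
      rw [← mul_assoc, ← mul_assoc, mul_inv_cancel₀ h4ne, one_mul] at h2
      rw [← h2]
      have hne : lam ≠ 0 := hlam.ne'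
      field_simp
      ring
    rw [hsub, hsc, T_val hs hs1, Real.Gamma_add_one hs.ne']
    have h1 : (2*s+1) ≠ 0 := by positivity
    have h2 : lam ≠ 0 := hlam.ne'
    field_simp
    ring
  refine ⟨?_, key⟩
  rw [show (2 - (1 - 2*s)) = 1 + 2*s by ring]
  exact key
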